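/- One-row special case (Andrews–Simay, smallest parts): For all positive integers n, k, m, \(s_{m}(n,k)=\sum_{j\ge 0}(-1)^{j+m-1}\binom{j}{m-1}\,\bar s_{j,k}(n)\), where the sum is finite since \(\bar s_{j,k}(n)=0\) for j > n. -/

import Mathlib

/-- An overpartition of `n`: a partition of `n` together with a set of distinct part values
that are overlined (overlining the last occurrence of each such value). -/
structure Overpartition (n : ℕ) where
  /-- The underlying partition of `n`. -/
  partition : Nat.Partition n
  /-- The set of overlined values. -/
  overlined : Finset ℕ
  /-- Every overlined value occurs as a part. -/
  overlined_mem : ∀ a ∈ overlined, a ∈ partition.parts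

/-- `s m n k` is the number of partitions of `n` in which `k` occurs as a part and exactly
`m - 1` distinct positive integers smaller than `k` occur as parts (i.e. `k` is the `m`-th
smallest part). -/
noncomputable def s (m n k : ℕ) : ℕ :=
  Nat.card {p : Nat.Partition n // k ∈ p.parts ∧
    (p.parts.toFinset.filter fun a => 0 < a ∧ a < k).card = m - 1}

/-- `sbar j k n` is the number of overpartitions of `n` in which the value `k` is overlined,
no value larger than `k` is overlined, and exactly `j` distinct positive values smaller than
`k` are overlined. -/
noncomputable def sbar (j k n : ℕ) : ℕ :=
  Nat.card {O : Overpartition n // k ∈ O.overlined ∧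
    (∀ a ∈ O.overlined, ¬ k < a) ∧
    (O.overlined.filter fun a => 0 < a ∧ a < k).card = j}

open Finset

/-- The key orthogonality identity:
`∑_{j=0}^{N} (-1)^{j+r} C(j,r) C(d,j) = [d = r]` when `d ≤ N`. -/
lemma key_sum (N d r : ℕ) (hd : d ≤ N) :
    ∑ j ∈ range (N + 1), (-1 : ℤ) ^ (j + r) * (j.choose r : ℤ) * (d.choose j : ℤ)
      = if d = r then 1 else 0 := by
  rcases lt_or_ge d r with h | h
  · rw [if_neg (by omega)]
    apply Finset.sum_eq_zero
    intro j hj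
    rcases lt_or_ge d j with hj' | hj'
    · rw [Nat.choose_eq_zero_of_lt hj']; ring
    · rw [Nat.choose_eq_zero_of_lt (by omega : j < r)]; ring
  · have hsub : Finset.Ico r (d + 1) ⊆ range (N + 1) := by
      intro x hx; simp only [Finset.mem_Ico, Finset.mem_range] at *; omega
    rw [← Finset.sum_subset hsub]
    · rw [Finset.sum_Ico_eq_sum_range]
      have : ∀ i ∈ range (d + 1 - r), (-1 : ℤ) ^ (r + i + r) * ((r + i).choose r : ℤ) * (d.choose (r + i) : ℤ)
          = ((-1 : ℤ) ^ r * (d.choose r : ℤ) * (-1)^r) * ((-1 : ℤ) ^ i * ((d - r).choose i : ℤ)) := by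
        intro i hi
        simp only [Finset.mem_range] at hi
        have h1 : d.choose (r + i) * (r + i).choose r = d.choose r * (d - r).choose i := by
          have := Nat.choose_mul (n := d) (k := r + i) (s := r) (by omega)
          simpa [Nat.add_sub_cancel_left] using this
        have h2 : ((d.choose (r+i) : ℤ)) * ((r + i).choose r : ℤ) = (d.choose r : ℤ) * ((d - r).choose i : ℤ) := by
          exact_mod_cast congrArg (Nat.cast : ℕ → ℤ) h1
        rw [pow_add, pow_add]
        linear_combination ((-1:ℤ)^r * (-1)^i * (-1)^r) * h2
      rw [Finset.sum_congr rfl this, ← Finset.mul_sum]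
      have hrange : d + 1 - r = (d - r) + 1 := by omega
      rw [hrange, Int.alternating_sum_range_choose]
      rcases eq_or_lt_of_le h with he | hlt
      · simp [← he, ← pow_add, ← two_mul, pow_mul]
      · rw [if_neg (by omega), if_neg (by omega)]; ring
    · intro x hx hnx
      simp only [Finset.mem_Ico, Finset.mem_range, not_and, not_lt] at hx hnx
      rcases lt_or_ge x r with h1 | h1
      · rw [Nat.choose_eq_zero_of_lt h1]; push_cast; ring
      · rw [Nat.choose_eq_zero_of_lt (by omega : d < x)]; push_cast; ring

lemma Overpartition.ext' {n} {O₁ O₂ : Overpartition n} (h1 : O₁.partition = O₂.partition)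
    (h2 : O₁.overlined = O₂.overlined) : O₁ = O₂ := by
  cases O₁; cases O₂; simp_all

/-- The overpartitions counted by `sbar j k n` correspond to a partition containing `k`
together with a `j`-element subset of its distinct small parts. -/
def sbarEquiv (j k n : ℕ) :
    {O : Overpartition n // k ∈ O.overlined ∧ (∀ a ∈ O.overlined, ¬ k < a) ∧
      (O.overlined.filter fun a => 0 < a ∧ a < k).card = j}
    ≃ Σ p : {p : Nat.Partition n // k ∈ p.parts},
        {S : Finset ℕ // S ∈ (p.1.parts.toFinset.filter fun a => 0 < a ∧ a < k).powersetCard j} where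
  toFun O := ⟨⟨O.1.partition, O.1.overlined_mem k O.2.1⟩,
    ⟨O.1.overlined.filter fun a => 0 < a ∧ a < k, by
      obtain ⟨O, h1, h2, h3⟩ := O
      simp only [Finset.mem_powersetCard]
      refine ⟨?_, h3⟩
      intro a ha
      simp only [Finset.mem_filter] at ha ⊢
      exact ⟨Multiset.mem_toFinset.2 (O.overlined_mem a ha.1), ha.2⟩⟩⟩
  invFun x := ⟨⟨x.1.1, insert k x.2.1, by
      intro a ha
      rcases Finset.mem_insert.1 ha with rfl | ha
      · exact x.1.2
      · have h := (Finset.mem_powersetCard.1 x.2.2).1 ha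
        exact Multiset.mem_toFinset.1 (Finset.mem_filter.1 h).1⟩,
    Finset.mem_insert_self _ _,
    by
      intro a ha
      rcases Finset.mem_insert.1 ha with rfl | ha
      · exact lt_irrefl _
      · have h := (Finset.mem_powersetCard.1 x.2.2).1 ha
        have h2 := (Finset.mem_filter.1 h).2
        omega,
    by
      have hfil : (insert k x.2.1).filter (fun a => 0 < a ∧ a < k) = x.2.1 := by
        ext a
        simp only [Finset.mem_filter, Finset.mem_insert]
        constructor
        · rintro ⟨rfl | ha, hcond⟩
          · omega
          · exact ha
        · intro ha
          have h := (Finset.mem_powersetCard.1 x.2.2).1 ha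
          have h2 := (Finset.mem_filter.1 h).2
          exact ⟨Or.inr ha, h2⟩
      rw [hfil, (Finset.mem_powersetCard.1 x.2.2).2]⟩
  left_inv := by
    rintro ⟨O, h1, h2, h3⟩
    apply Subtype.ext
    apply Overpartition.ext'
    · rfl
    · ext a
      simp only [Finset.mem_insert, Finset.mem_filter]
      constructor
      · rintro (rfl | ⟨ha, _⟩)
        · exact h1
        · exact ha
      · intro ha
        by_cases hak : a = k
        · exact Or.inl hak
        · refine Or.inr ⟨ha, O.partition.parts_pos (O.overlined_mem a ha), ?_⟩
          have := h2 a ha; omega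
  right_inv := by
    rintro ⟨⟨p, hp⟩, ⟨S, hS⟩⟩
    have hfil : (insert k S).filter (fun a => 0 < a ∧ a < k) = S := by
      ext a
      simp only [Finset.mem_filter, Finset.mem_insert]
      constructor
      · rintro ⟨rfl | ha, hcond⟩
        · omega
        · exact ha
      · intro ha
        have h := (Finset.mem_powersetCard.1 hS).1 ha
        have h2 := (Finset.mem_filter.1 h).2
        exact ⟨Or.inr ha, h2⟩
    exact Sigma.ext rfl (heq_of_eq (Subtype.ext hfil))

lemma sbar_eq (j k n : ℕ) [DecidablePred fun p : Nat.Partition n => k ∈ p.parts] :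
    sbar j k n = ∑ p ∈ Finset.univ.filter (fun p : Nat.Partition n => k ∈ p.parts),
      ((p.parts.toFinset.filter fun a => 0 < a ∧ a < k).card).choose j := by
  classical
  rw [sbar, Nat.card_congr (sbarEquiv j k n), Nat.card_eq_fintype_card, Fintype.card_sigma]
  rw [Finset.sum_subtype (p := fun p : Nat.Partition n => k ∈ p.parts) _ (fun x => by simp)
      (fun p : Nat.Partition n =>
      ((p.parts.toFinset.filter fun a => 0 < a ∧ a < k).card).choose j)]
  congr 1
  ext p
  rw [← Finset.card_powersetCard]
  exact Fintype.card_coe _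

lemma s_eq (m n k : ℕ) [DecidablePred fun p : Nat.Partition n => k ∈ p.parts] :
    s m n k = ∑ p ∈ Finset.univ.filter (fun p : Nat.Partition n => k ∈ p.parts),
      (if (p.parts.toFinset.filter fun a => 0 < a ∧ a < k).card = m - 1 then 1 else 0) := by
  classical
  rw [s, Nat.card_eq_fintype_card, Fintype.card_subtype, ← Finset.filter_filter,
    Finset.card_filter]

/-- **Andrews–Simay (smallest parts).** For all positive integers `n`, `k`, `m`,
`s m (n, k) = ∑_{j ≥ 0} (-1)^(j+m-1) C(j, m-1) s̄_{j,k}(n)`; the sum is finite since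
`sbar j k n = 0` for `j > n`. -/
theorem s_eq_alternating_sum_sbar (n k m : ℕ) (hn : 0 < n) (hk : 0 < k) (hm : 0 < m) :
    (s m n k : ℤ) =
      ∑ j ∈ Finset.range (n + 1),
        (-1 : ℤ) ^ (j + (m - 1)) * (j.choose (m - 1) : ℤ) * (sbar j k n : ℤ) := by
  classical
  have hc : ∀ p : Nat.Partition n, (p.parts.toFinset.filter fun a => 0 < a ∧ a < k).card ≤ n := by
    intro p
    calc (p.parts.toFinset.filter fun a => 0 < a ∧ a < k).card
        ≤ p.parts.toFinset.card := Finset.card_filter_le _ _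
      _ ≤ Multiset.card p.parts := Multiset.toFinset_card_le _
      _ ≤ p.parts.sum := by
          have h := Multiset.card_nsmul_le_sum (s := p.parts) (a := 1)
            (fun x hx => p.parts_pos hx)
          simpa using h
      _ = n := p.parts_sum
  have hrhs : ∀ j, (sbar j k n : ℤ) =
      ∑ p ∈ Finset.univ.filter (fun p : Nat.Partition n => k ∈ p.parts),
      (((p.parts.toFinset.filter fun a => 0 < a ∧ a < k).card).choose j : ℤ) := by
    intro j; rw [sbar_eq j k n]; push_cast; rfl
  calc (s m n k : ℤ)
      = ∑ p ∈ Finset.univ.filter (fun p : Nat.Partition n => k ∈ p.parts),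
          (if (p.parts.toFinset.filter fun a => 0 < a ∧ a < k).card = m - 1
            then (1 : ℤ) else 0) := by
        rw [s_eq m n k]; push_cast; rfl
    _ = ∑ p ∈ Finset.univ.filter (fun p : Nat.Partition n => k ∈ p.parts),
          ∑ j ∈ Finset.range (n + 1),
            (-1 : ℤ) ^ (j + (m - 1)) * (j.choose (m - 1) : ℤ) *
              (((p.parts.toFinset.filter fun a => 0 < a ∧ a < k).card).choose j : ℤ) := by
        refine Finset.sum_congr rfl fun p _ => ?_
        rw [key_sum n _ (m - 1) (hc p)]
    _ = ∑ j ∈ Finset.range (n + 1),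
        (-1 : ℤ) ^ (j + (m - 1)) * (j.choose (m - 1) : ℤ) * (sbar j k n : ℤ) := by
        rw [Finset.sum_comm]
        refine Finset.sum_congr rfl fun j _ => ?_
        rw [hrhs j, Finset.mul_sum]
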